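/- For every integer N ≥ 1, the N-th order approximated Hilbert curve h_N is a bijection from {0,1,...,4^N−1} onto the grid {0,1,...,2^N−1} × {0,1,...,2^N−1}. -/

import Mathlib

/-- The `N`-th order approximated Hilbert curve, mapping indices `{0,...,4^N-1}`
to nodes of the grid `{0,...,2^N-1} × {0,...,2^N-1} ⊆ ℤ × ℤ`. -/
def hilbert : ℕ → ℕ → ℤ × ℤ
  | 0, _ => (0, 0)
  | 1, i =>
    if i = 0 then (0, 0)
    else if i = 1 then (0, 1)
    else if i = 2 then (1, 1)
    else (1, 0)
  | N + 2, i =>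
    let q := i / 4 ^ (N + 1)
    let s : ℤ := 2 ^ (N + 1)
    let p := hilbert (N + 1) (i % 4 ^ (N + 1))
    if q = 0 then (p.2, p.1)
    else if q = 1 then (p.1, p.2 + s)
    else if q = 2 then (p.1 + s, p.2 + s)
    else (2 * s - 1 - p.2, s - 1 - p.1)

/-- Euclidean distance between two points of `ℤ × ℤ`. -/
noncomputable def euclDist (a b : ℤ × ℤ) : ℝ :=
  Real.sqrt (((a.1 - b.1 : ℤ) : ℝ) ^ 2 + ((a.2 - b.2 : ℤ) : ℝ) ^ 2)

/-- Two points of `ℤ × ℤ` are edge connected if their Euclidean distance equals 1. -/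
def EdgeConnected (a b : ℤ × ℤ) : Prop := euclDist a b = 1

/-- Two points of `ℤ × ℤ` are vertex connected if both coordinates differ by exactly 1. -/
def VertexConnected (a b : ℤ × ℤ) : Prop := |a.1 - b.1| = 1 ∧ |a.2 - b.2| = 1

/-- Membership in the grid `{0,...,2^N-1} × {0,...,2^N-1}`. -/
def InGrid (N : ℕ) (p : ℤ × ℤ) : Prop :=
  0 ≤ p.1 ∧ p.1 ≤ 2 ^ N - 1 ∧ 0 ≤ p.2 ∧ p.2 ≤ 2 ^ N - 1

/-- The closed segment from `u` to `v` (centres of cells, viewed in `ℝ²`) is disjoint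
from the open unit cell centred at `c`. -/
def SegAvoidsCell (u v c : ℤ × ℤ) : Prop :=
  ∀ t : ℝ, t ∈ Set.Icc (0 : ℝ) 1 →
    ¬ (|(1 - t) * (u.1 : ℝ) + t * (v.1 : ℝ) - (c.1 : ℝ)| < 1 / 2 ∧
       |(1 - t) * (u.2 : ℝ) + t * (v.2 : ℝ) - (c.2 : ℝ)| < 1 / 2)

/-- An evasion tour for the blocked index set `B` on the `N`-th order Hilbert grid:
a sequence of waypoints `w 0, ..., w m` in the grid, starting at the entry node,
ending at the exit node, avoiding all blocked nodes, covering every unblocked grid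
point, and whose straight-line segments avoid the interiors of all blocked cells. -/
def IsEvasionTour (N : ℕ) (B : Finset ℕ) (m : ℕ) (w : ℕ → ℤ × ℤ) : Prop :=
  w 0 = hilbert N 0 ∧
  w m = hilbert N (4 ^ N - 1) ∧
  (∀ j ≤ m, InGrid N (w j)) ∧
  (∀ j ≤ m, ∀ b ∈ B, w j ≠ hilbert N b) ∧
  (∀ p : ℤ × ℤ, InGrid N p → (∀ b ∈ B, p ≠ hilbert N b) → ∃ j ≤ m, w j = p) ∧
  (∀ j < m, ∀ b ∈ B, SegAvoidsCell (w j) (w (j + 1)) (hilbert N b))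

lemma hilbert_step (n i : ℕ) :
    hilbert (n + 2) i =
      (if i / 4 ^ (n + 1) = 0 then
        ((hilbert (n + 1) (i % 4 ^ (n + 1))).2, (hilbert (n + 1) (i % 4 ^ (n + 1))).1)
      else if i / 4 ^ (n + 1) = 1 then
        ((hilbert (n + 1) (i % 4 ^ (n + 1))).1,
          (hilbert (n + 1) (i % 4 ^ (n + 1))).2 + 2 ^ (n + 1))
      else if i / 4 ^ (n + 1) = 2 then
        ((hilbert (n + 1) (i % 4 ^ (n + 1))).1 + 2 ^ (n + 1),
          (hilbert (n + 1) (i % 4 ^ (n + 1))).2 + 2 ^ (n + 1))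
      else (2 * 2 ^ (n + 1) - 1 - (hilbert (n + 1) (i % 4 ^ (n + 1))).2,
          2 ^ (n + 1) - 1 - (hilbert (n + 1) (i % 4 ^ (n + 1))).1)) := rfl

lemma div_mod_helper {B r : ℕ} (q : ℕ) (hB : 0 < B) (hr : r < B) :
    (B * q + r) / B = q ∧ (B * q + r) % B = r := by
  constructor
  · rw [Nat.mul_add_div hB, Nat.div_eq_of_lt hr, Nat.add_zero]
  · rw [Nat.mul_add_mod, Nat.mod_eq_of_lt hr]

lemma four_cases {q : ℕ} (h : q < 4) : q = 0 ∨ q = 1 ∨ q = 2 ∨ q = 3 := by omega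

lemma hilbert_key : ∀ N : ℕ,
    Set.BijOn (hilbert (N + 1)) (Set.Iio (4 ^ (N + 1))) {p : ℤ × ℤ | InGrid (N + 1) p} := by
  intro N
  induction N with
  | zero =>
    refine ⟨?_, ?_, ?_⟩
    · intro i hi
      simp only [Set.mem_Iio] at hi
      interval_cases i <;> simp [hilbert, InGrid]
    · intro i hi j hj hEq
      simp only [Set.mem_Iio] at hi hj
      interval_cases i <;> interval_cases j <;> simp_all [hilbert, Prod.ext_iff]
    · rintro ⟨x, y⟩ hp
      obtain ⟨h1, h2, h3, h4⟩ := hp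
      simp only at h1 h2 h3 h4
      norm_num at h2 h4
      have hx : x = 0 ∨ x = 1 := by omega
      have hy : y = 0 ∨ y = 1 := by omega
      rcases hx with hx | hx <;> rcases hy with hy | hy <;> subst hx <;> subst hy
      · exact ⟨0, by norm_num, by simp [hilbert]⟩
      · exact ⟨1, by norm_num, by simp [hilbert]⟩
      · exact ⟨3, by norm_num, by simp [hilbert]⟩
      · exact ⟨2, by norm_num, by simp [hilbert]⟩
  | succ n ih =>
    have hB : 0 < 4 ^ (n + 1) := Nat.pow_pos (by norm_num)
    have h4 : (4 : ℕ) ^ (n + 2) = 4 * 4 ^ (n + 1) := by ring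
    have hS : (0 : ℤ) < 2 ^ (n + 1) := by positivity
    have h2S : (2 : ℤ) ^ (n + 2) = 2 * 2 ^ (n + 1) := by ring
    refine ⟨?_, ?_, ?_⟩
    · -- MapsTo
      intro i hi
      simp only [Set.mem_Iio] at hi
      have hr : i % 4 ^ (n + 1) < 4 ^ (n + 1) := Nat.mod_lt _ hB
      have hq : i / 4 ^ (n + 1) < 4 := Nat.div_lt_of_lt_mul (by omega)
      have hp := ih.mapsTo (Set.mem_Iio.mpr hr)
      obtain ⟨h1, h2, h3, h4'⟩ := hp
      have hq4 := four_cases hq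
      rcases hq4 with h | h | h | h <;>
        simp only [Set.mem_setOf_eq, InGrid, hilbert_step, h, h2S] <;> norm_num <;>
        refine ⟨by omega, by omega, by omega, by omega⟩
    · -- InjOn
      intro i hi j hj hEq
      simp only [Set.mem_Iio] at hi hj
      have hri : i % 4 ^ (n + 1) < 4 ^ (n + 1) := Nat.mod_lt _ hB
      have hrj : j % 4 ^ (n + 1) < 4 ^ (n + 1) := Nat.mod_lt _ hB
      have hqi : i / 4 ^ (n + 1) < 4 := Nat.div_lt_of_lt_mul (by omega)
      have hqj : j / 4 ^ (n + 1) < 4 := Nat.div_lt_of_lt_mul (by omega)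
      obtain ⟨a1, a2, a3, a4⟩ := ih.mapsTo (Set.mem_Iio.mpr hri)
      obtain ⟨b1, b2, b3, b4⟩ := ih.mapsTo (Set.mem_Iio.mpr hrj)
      have hdi := Nat.div_add_mod i (4 ^ (n + 1))
      have hdj := Nat.div_add_mod j (4 ^ (n + 1))
      have hq4i := four_cases hqi
      have hq4j := four_cases hqj
      have key : i / 4 ^ (n + 1) = j / 4 ^ (n + 1) ∧
          hilbert (n + 1) (i % 4 ^ (n + 1)) = hilbert (n + 1) (j % 4 ^ (n + 1)) := by
        rcases hq4i with h | h | h | h <;> rcases hq4j with h' | h' | h' | h' <;>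
          simp only [hilbert_step, h, h'] at hEq <;> norm_num [Prod.ext_iff] at hEq ⊢ <;>
          obtain ⟨e1, e2⟩ := hEq <;>
          exact ⟨by omega, by omega⟩
      have hmod : i % 4 ^ (n + 1) = j % 4 ^ (n + 1) :=
        ih.injOn (Set.mem_Iio.mpr hri) (Set.mem_Iio.mpr hrj) key.2
      calc i = 4 ^ (n + 1) * (i / 4 ^ (n + 1)) + i % 4 ^ (n + 1) := hdi.symm
        _ = 4 ^ (n + 1) * (j / 4 ^ (n + 1)) + j % 4 ^ (n + 1) := by rw [key.1, hmod]
        _ = j := hdj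
    · -- SurjOn
      rintro ⟨x, y⟩ hp
      obtain ⟨h1, h2, h3, h4'⟩ := hp
      simp only at h1 h2 h3 h4'
      rw [h2S] at h2 h4'
      rcases lt_or_ge x (2 ^ (n + 1)) with hx | hx <;> rcases lt_or_ge y (2 ^ (n + 1)) with hy | hy
      · -- q = 0, preimage of (y, x)
        obtain ⟨r, hr, hpr⟩ := ih.surjOn (show (y, x) ∈ {p : ℤ × ℤ | InGrid (n + 1) p} by
          exact ⟨by omega, by omega, by omega, by omega⟩)
        simp only [Set.mem_Iio] at hr
        refine ⟨r, Set.mem_Iio.mpr (by omega), ?_⟩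
        have hd : r / 4 ^ (n + 1) = 0 := Nat.div_eq_of_lt hr
        have hm : r % 4 ^ (n + 1) = r := Nat.mod_eq_of_lt hr
        simp [hilbert_step, hd, hm, hpr]
      · -- q = 1, preimage of (x, y - s)
        obtain ⟨r, hr, hpr⟩ := ih.surjOn (show (x, y - 2 ^ (n + 1)) ∈
            {p : ℤ × ℤ | InGrid (n + 1) p} from ⟨by omega, by omega, by omega, by omega⟩)
        simp only [Set.mem_Iio] at hr
        obtain ⟨hd, hm⟩ := div_mod_helper 1 hB hr
        refine ⟨4 ^ (n + 1) * 1 + r, Set.mem_Iio.mpr (by omega), ?_⟩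
        simp only [hilbert_step, hd, hm, hpr]
        norm_num
      · -- q = 3, preimage of (s - 1 - y, 2s - 1 - x)
        obtain ⟨r, hr, hpr⟩ := ih.surjOn (show
            (2 ^ (n + 1) - 1 - y, 2 * 2 ^ (n + 1) - 1 - x) ∈
            {p : ℤ × ℤ | InGrid (n + 1) p} from ⟨by omega, by omega, by omega, by omega⟩)
        simp only [Set.mem_Iio] at hr
        obtain ⟨hd, hm⟩ := div_mod_helper 3 hB hr
        refine ⟨4 ^ (n + 1) * 3 + r, Set.mem_Iio.mpr (by omega), ?_⟩
        simp only [hilbert_step, hd, hm, hpr]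
        norm_num [Prod.ext_iff]
      · -- q = 2, preimage of (x - s, y - s)
        obtain ⟨r, hr, hpr⟩ := ih.surjOn (show (x - 2 ^ (n + 1), y - 2 ^ (n + 1)) ∈
            {p : ℤ × ℤ | InGrid (n + 1) p} from ⟨by omega, by omega, by omega, by omega⟩)
        simp only [Set.mem_Iio] at hr
        obtain ⟨hd, hm⟩ := div_mod_helper 2 hB hr
        refine ⟨4 ^ (n + 1) * 2 + r, Set.mem_Iio.mpr (by omega), ?_⟩
        simp only [hilbert_step, hd, hm, hpr]
        norm_num

theorem hilbert_bijOn (N : ℕ) (hN : 1 ≤ N) :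
    Set.BijOn (hilbert N) (Set.Iio (4 ^ N)) {p : ℤ × ℤ | InGrid N p} := by
  obtain ⟨M, rfl⟩ := Nat.exists_eq_add_of_le hN
  rw [Nat.add_comm] at *
  exact hilbert_key M
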